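/- Let A ∈ ℤ^{m×n} with rows a₁, …, a_m, let b ∈ ℤ^m, let E ⊆ {1,…,m}, and let c̃ ∈ ℤⁿ. Suppose the feasible region F = {x ∈ ℝⁿ ∣ aᵢᵀx = bᵢ for i ∈ E, aᵢᵀx ≤ bᵢ for i ∉ E} is nonempty and bounded, so that the maximum μ = max{ c̃ᵀx ∣ x ∈ F } exists. Then there exists ỹ ∈ ℝ^m such that: Aᵀỹ = c̃; ỹᵢ ≥ 0 for every i ∉ E; bᵀỹ = μ; ỹ has at most n nonzero components; and ỹ_j = 0 for every j ∉ E such that a_j is a linear combination of the vectors aᵢ, i ∈ E. -/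

import Mathlib

set_option linter.unusedSectionVars false
set_option maxHeartbeats 1000000
open scoped InnerProductSpace

open Finset in
lemma carath_aux {M : Type*} [AddCommGroup M] [Module ℝ M] {ι : Type*} [Fintype ι]
    [DecidableEq ι] (v : ι → M) (c : M) :
    ∀ (N : ℕ) (y : ι → ℝ), (Finset.univ.filter (fun i => y i ≠ 0)).card ≤ N →
      (∀ i, 0 ≤ y i) → ∑ i, y i • v i = c →
    ∃ z : ι → ℝ, (∀ i, 0 ≤ z i) ∧ ∑ i, z i • v i = c ∧
      LinearIndependent ℝ (fun i : {i // z i ≠ 0} => v i) := by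
  classical
  intro N
  induction N with
  | zero =>
    intro y hcard hy hc
    refine ⟨y, hy, hc, ?_⟩
    have h0 : ∀ i, y i = 0 := by
      intro i
      by_contra hne
      have : i ∈ Finset.univ.filter (fun i => y i ≠ 0) := by simp [hne]
      have := Finset.card_pos.mpr ⟨i, this⟩
      omega
    have : IsEmpty {i // y i ≠ 0} := ⟨fun ⟨i, hi⟩ => hi (h0 i)⟩
    exact linearIndependent_empty_type
  | succ N ih =>
    intro y hcard hy hc
    by_cases hli : LinearIndependent ℝ (fun i : {i // y i ≠ 0} => v i)
    · exact ⟨y, hy, hc, hli⟩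
    · obtain ⟨g, hg0, ⟨i₁, hi₁⟩⟩ := Fintype.not_linearIndependent_iff.mp hli
      -- wlog some positive coefficient: pick sign
      obtain ⟨g, hg0, i₁, hi₁⟩ :
          ∃ g : {i // y i ≠ 0} → ℝ, ∑ i, g i • v ↑i = 0 ∧ ∃ i, 0 < g i := by
        rcases lt_or_gt_of_ne hi₁ with h | h
        · refine ⟨-g, by simpa using hg0, i₁, by simpa using h⟩
        · exact ⟨g, hg0, i₁, h⟩
      set l : ι → ℝ := fun i => if h : y i ≠ 0 then g ⟨i, h⟩ else 0 with hl
      have hlval : ∀ i : {i // y i ≠ 0}, l ↑i = g i := by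
        intro ⟨i, hi⟩; simp [hl, hi]
      have hlsum : ∑ i, l i • v i = 0 := by
        have h1 : ∑ i ∈ Finset.univ.filter (fun i => y i ≠ 0), l i • v i
            = ∑ i : ι, l i • v i := by
          apply Finset.sum_filter_of_ne
          intro i _ hne
          by_contra h0
          have hli0 : l i = 0 := by simp [hl, h0]
          rw [hli0, zero_smul] at hne
          exact hne rfl
        have h2 : ∑ i ∈ Finset.univ.filter (fun i => y i ≠ 0), l i • v i
            = ∑ i : {i // y i ≠ 0}, l ↑i • v ↑i := by
          apply Finset.sum_subtype
          intro i; simp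
        rw [← h1, h2]
        rw [← hg0]
        exact Finset.sum_congr rfl (fun i _ => by rw [hlval])
      -- the pivot
      have hPne : (Finset.univ.filter (fun i => 0 < l i)).Nonempty :=
        ⟨↑i₁, by simp [hlval i₁, hi₁]⟩
      set t : ℝ := (Finset.univ.filter (fun i => 0 < l i)).inf' hPne (fun i => y i / l i)
        with ht
      obtain ⟨i₀, hi₀mem, hi₀⟩ := Finset.exists_mem_eq_inf' hPne (fun i => y i / l i)
      have hi₀pos : 0 < l i₀ := by simpa using hi₀mem
      have htle : ∀ i, 0 < l i → t ≤ y i / l i := by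
        intro i hi
        rw [ht]
        exact Finset.inf'_le _ (by simp [hi])
      have ht0 : 0 ≤ t := by
        rw [ht, hi₀]
        exact div_nonneg (hy i₀) hi₀pos.le
      set z : ι → ℝ := fun i => y i - t * l i with hz
      have hznn : ∀ i, 0 ≤ z i := by
        intro i
        rcases le_or_gt (l i) 0 with h | h
        · have : t * l i ≤ 0 := mul_nonpos_of_nonneg_of_nonpos ht0 h
          simp only [hz]; linarith [hy i]
        · have h1 := htle i h
          have h2 : t * l i ≤ y i := (le_div_iff₀ h).mp h1
          simp only [hz]; linarith
      have hzsum : ∑ i, z i • v i = c := by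
        simp only [hz, sub_smul, mul_smul, Finset.sum_sub_distrib, ← Finset.smul_sum,
          hlsum, smul_zero, sub_zero, hc]
      have hzsupp : ∀ i, z i ≠ 0 → y i ≠ 0 := by
        intro i hzi
        by_contra h0
        have hl0 : l i = 0 := by simp [hl, h0]
        apply hzi
        simp only [hz, h0, hl0, mul_zero, sub_zero]
      have hyi₀ : y i₀ ≠ 0 := by
        intro h0
        have : l i₀ = 0 := by simp [hl, h0]
        rw [this] at hi₀pos
        exact lt_irrefl _ hi₀pos
      have hzi₀ : z i₀ = 0 := by
        simp only [hz, ht, hi₀]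
        field_simp
        ring
      have hcard' : (Finset.univ.filter (fun i => z i ≠ 0)).card ≤ N := by
        have hsub : Finset.univ.filter (fun i => z i ≠ 0) ⊆
            (Finset.univ.filter (fun i => y i ≠ 0)).erase i₀ := by
          intro i hi
          simp only [Finset.mem_filter, Finset.mem_univ, true_and] at hi
          refine Finset.mem_erase.mpr ⟨?_, by simp [hzsupp i hi]⟩
          rintro rfl; exact hi hzi₀
        calc (Finset.univ.filter (fun i => z i ≠ 0)).card
            ≤ ((Finset.univ.filter (fun i => y i ≠ 0)).erase i₀).card :=
              Finset.card_le_card hsub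
          _ = (Finset.univ.filter (fun i => y i ≠ 0)).card - 1 :=
              Finset.card_erase_of_mem (by simp [hyi₀])
          _ ≤ N := by omega
      exact ih z hcard' hznn hzsum

lemma carath {M : Type*} [AddCommGroup M] [Module ℝ M] {ι : Type*} [Fintype ι]
    (v : ι → M) (c : M) (y : ι → ℝ) (hy : ∀ i, 0 ≤ y i) (hc : ∑ i, y i • v i = c) :
    ∃ z : ι → ℝ, (∀ i, 0 ≤ z i) ∧ ∑ i, z i • v i = c ∧
      LinearIndependent ℝ (fun i : {i // z i ≠ 0} => v i) := by
  classical
  exact carath_aux v c _ y le_rfl hy hc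


section Cone
variable {H : Type*} [NormedAddCommGroup H] [InnerProductSpace ℝ H] [FiniteDimensional ℝ H]

lemma sum_subtype_smul {ι : Type*} [Fintype ι] [DecidableEq ι] (v : ι → H) (z : ι → ℝ)
    (s : Finset ι) (hs : ∀ i, z i ≠ 0 → i ∈ s) :
    ∑ i : s, z ↑i • v ↑i = ∑ i, z i • v i := by
  classical
  rw [← Finset.sum_subtype s (fun i => Iff.rfl) (fun i => z i • v i)]
  apply Finset.sum_subset (Finset.subset_univ s)
  intro i _ hi
  have : z i = 0 := by by_contra h; exact hi (hs i h)
  simp [this]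

lemma cone_isClosed {ι : Type*} [Fintype ι] (v : ι → H) :
    IsClosed {x : H | ∃ y : ι → ℝ, (∀ i, 0 ≤ y i) ∧ ∑ i, y i • v i = x} := by
  classical
  have hEq : {x : H | ∃ y : ι → ℝ, (∀ i, 0 ≤ y i) ∧ ∑ i, y i • v i = x}
      = ⋃ s ∈ {s : Finset ι | LinearIndependent ℝ (fun i : s => v ↑i)},
          (fun y : s → ℝ => ∑ i : s, y i • v ↑i) '' {y | ∀ i, 0 ≤ y i} := by
    ext x
    simp only [Set.mem_setOf_eq, Set.mem_iUnion, Set.mem_image]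
    constructor
    · rintro ⟨y, hy, rfl⟩
      obtain ⟨z, hz, hzsum, hzli⟩ := carath v _ y hy rfl
      set s : Finset ι := Finset.univ.filter (fun i => z i ≠ 0) with hsdef
      refine ⟨s, ?_, fun i => z ↑i, fun i => hz ↑i, ?_⟩
      · exact hzli.comp (fun i : {i // i ∈ s} =>
            (⟨↑i, (Finset.mem_filter.mp i.2).2⟩ : {i // z i ≠ 0}))
          (by
            intro a b hab
            have h2 := congrArg Subtype.val hab
            exact Subtype.ext h2)
      · rw [sum_subtype_smul v z s (fun i hi => by simp [hsdef, hi])]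
        exact hzsum
    · rintro ⟨s, hsli, y, hy, rfl⟩
      refine ⟨fun i => if h : i ∈ s then y ⟨i, h⟩ else 0, ?_, ?_⟩
      · intro i
        by_cases h : i ∈ s
        · simpa [h] using hy ⟨i, h⟩
        · simp [h]
      · rw [← sum_subtype_smul v _ s (fun i hi => by
          by_contra h; simp [h] at hi)]
        apply Finset.sum_congr rfl
        intro i _
        simp [i.2]
  rw [hEq]
  apply Set.Finite.isClosed_biUnion (Set.toFinite _)
  intro s hs
  have hker : LinearMap.ker
      ({ toFun := fun y : s → ℝ => ∑ i : s, y i • v ↑i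
         map_add' := fun a b => by simp [add_smul, Finset.sum_add_distrib]
         map_smul' := fun r a => by simp [mul_smul, Finset.smul_sum] } :
        (s → ℝ) →ₗ[ℝ] H) = ⊥ := by
    rw [LinearMap.ker_eq_bot']
    intro y hy0
    funext i
    exact Fintype.linearIndependent_iff.mp hs y hy0 i
  have hemb := LinearMap.isClosedEmbedding_of_injective hker
  have horth : IsClosed {y : s → ℝ | ∀ i, 0 ≤ y i} := by
    have : {y : s → ℝ | ∀ i, 0 ≤ y i} = ⋂ i, {y : s → ℝ | 0 ≤ y i} :=
      Set.setOf_forall _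
    rw [this]
    exact isClosed_iInter fun i => isClosed_le continuous_const (continuous_apply i)
  exact hemb.isClosedMap _ horth

lemma farkas {ι : Type*} [Fintype ι] (v : ι → H) (c : H)
    (h : ¬ ∃ y : ι → ℝ, (∀ i, 0 ≤ y i) ∧ ∑ i, y i • v i = c) :
    ∃ d : H, (∀ i, ⟪v i, d⟫_ℝ ≤ 0) ∧ 0 < ⟪c, d⟫_ℝ := by
  classical
  set K : ConvexCone ℝ H :=
    { carrier := {x : H | ∃ y : ι → ℝ, (∀ i, 0 ≤ y i) ∧ ∑ i, y i • v i = x}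
      smul_mem' := by
        rintro t ht x ⟨y, hy, rfl⟩
        exact ⟨fun i => t * y i, fun i => mul_nonneg ht.le (hy i),
          by simp [mul_smul, Finset.smul_sum]⟩
      add_mem' := by
        rintro x ⟨y, hy, rfl⟩ x' ⟨y', hy', rfl⟩
        exact ⟨fun i => y i + y' i, fun i => add_nonneg (hy i) (hy' i),
          by simp [add_smul, Finset.sum_add_distrib]⟩ } with hK
  have hne : (K : Set H).Nonempty := ⟨0, ⟨0, fun i => le_rfl, by simp⟩⟩
  have hcl : IsClosed (K : Set H) := cone_isClosed v
  have hcK : c ∉ K := h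
  obtain ⟨d₀, hd₀, hd₀c⟩ : ∃ y, (∀ x ∈ K, 0 ≤ ⟪x, y⟫_ℝ) ∧ ⟪y, c⟫_ℝ < 0 := by
    have h0 : (0 : H) ∈ K := ⟨0, fun i => le_rfl, by simp⟩
    obtain ⟨y, hy1, hy2⟩ := ProperCone.hyperplane_separation'
      ({ toSubmodule := K.toPointedCone h0, isClosed' := hcl } : ProperCone ℝ H) hcK
    exact ⟨y, fun x hx => hy1 x hx, by rw [real_inner_comm]; exact hy2⟩
  refine ⟨-d₀, fun i => ?_, ?_⟩
  · have hvi : v i ∈ K := ⟨fun j => if j = i then 1 else 0, fun j => by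
      by_cases hj : j = i <;> simp [hj], by simp⟩
    have := hd₀ _ hvi
    rw [inner_neg_right]
    linarith
  · rw [inner_neg_right, real_inner_comm]
    linarith

end Cone


theorem structured_optimal_dual_solution
    (n m : ℕ)
    (A : Matrix (Fin m) (Fin n) ℤ) (b : Fin m → ℤ)
    (E : Set (Fin m)) (ct : Fin n → ℤ)
    (F : Set (Fin n → ℝ))
    (hF : F = {x : Fin n → ℝ |
      (∀ i ∈ E, ∑ j, (A i j : ℝ) * x j = (b i : ℝ)) ∧
      (∀ i ∉ E, ∑ j, (A i j : ℝ) * x j ≤ (b i : ℝ))})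
    (hFne : F.Nonempty) (hFbdd : Bornology.IsBounded F)
    (μ : ℝ) (hμ : IsGreatest ((fun x => ∑ j, (ct j : ℝ) * x j) '' F) μ) :
    ∃ y : Fin m → ℝ,
      (∀ j, ∑ i, (A i j : ℝ) * y i = (ct j : ℝ)) ∧
      (∀ i ∉ E, 0 ≤ y i) ∧
      (∑ i, (b i : ℝ) * y i = μ) ∧
      {i | y i ≠ 0}.ncard ≤ n ∧
      (∀ j ∉ E,
        (fun jj => (A j jj : ℝ)) ∈
          Submodule.span ℝ ((fun i => fun jj => (A i jj : ℝ)) '' E) → y j = 0) := by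
  classical
  obtain ⟨xs0, hxsF, hxsval⟩ := hμ.1
  subst hF
  obtain ⟨hxeq0, hxle0⟩ := hxsF
  -- move to EuclideanSpace
  let a : Fin m → EuclideanSpace ℝ (Fin n) := fun i => WithLp.toLp 2 (fun j => (A i j : ℝ))
  let cv : EuclideanSpace ℝ (Fin n) := WithLp.toLp 2 (fun j => (ct j : ℝ))
  let xs : EuclideanSpace ℝ (Fin n) := WithLp.toLp 2 xs0
  have hinner : ∀ w x : EuclideanSpace ℝ (Fin n), ⟪w, x⟫_ℝ = ∑ j, w j * x j := fun w x => by
    simp [PiLp.inner_apply, RCLike.inner_apply, mul_comm]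
  have ha_eq : ∀ i ∈ E, ⟪a i, xs⟫_ℝ = (b i : ℝ) := fun i hi => by
    rw [hinner]; exact hxeq0 i hi
  have ha_le : ∀ i ∉ E, ⟪a i, xs⟫_ℝ ≤ (b i : ℝ) := fun i hi => by
    rw [hinner]; exact hxle0 i hi
  have hcval : ⟪cv, xs⟫_ℝ = μ := by rw [hinner]; exact hxsval
  -- the span of the equality rows and the projection
  set W : Submodule ℝ (EuclideanSpace ℝ (Fin n)) := Submodule.span ℝ (a '' E) with hW
  have haW : ∀ i ∈ E, a i ∈ W := fun i hi =>
    Submodule.subset_span (Set.mem_image_of_mem a hi)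
  let π : EuclideanSpace ℝ (Fin n) → EuclideanSpace ℝ (Fin n) :=
    fun x => x - (W.orthogonalProjectionOnto x : EuclideanSpace ℝ (Fin n))
  have hπ_apply : ∀ x : EuclideanSpace ℝ (Fin n),
      π x = x - (W.orthogonalProjectionOnto x : EuclideanSpace ℝ (Fin n)) := fun x => rfl
  have hπ_sub : ∀ x y : EuclideanSpace ℝ (Fin n), π (x - y) = π x - π y := fun x y => by
    rw [hπ_apply, hπ_apply, hπ_apply, map_sub]
    rw [Submodule.coe_sub]
    abel
  have hπ_smul : ∀ (c : ℝ) (x : EuclideanSpace ℝ (Fin n)), π (c • x) = c • π x :=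
    fun c x => by
    rw [hπ_apply, hπ_apply, map_smul, smul_sub]
    rfl
  have hπ_sum : ∀ (f : Fin m → EuclideanSpace ℝ (Fin n)),
      π (∑ i, f i) = ∑ i, π (f i) := fun f => by
    simp only [hπ_apply, map_sum]
    rw [AddSubmonoidClass.coe_finset_sum, Finset.sum_sub_distrib]
  have hπ_mem : ∀ x : EuclideanSpace ℝ (Fin n), π x ∈ Wᗮ := fun x =>
    Submodule.sub_starProjection_mem_orthogonal (K := W) x
  have hπ_zero : ∀ x ∈ W, π x = 0 := fun x hx => by
    rw [hπ_apply]
    exact sub_eq_zero.mpr ((Submodule.starProjection_eq_self_iff (K := W)).mpr hx).symm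
  have hπ_zero_iff : ∀ x : EuclideanSpace ℝ (Fin n), π x = 0 → x ∈ W := fun x hx => by
    rw [hπ_apply, sub_eq_zero] at hx
    rw [hx]
    exact (W.orthogonalProjectionOnto x).2
  have hπ_adj : ∀ x y : EuclideanSpace ℝ (Fin n), ⟪x, π y⟫_ℝ = ⟪π x, y⟫_ℝ := fun x y => by
    rw [hπ_apply, hπ_apply, inner_sub_right, inner_sub_left]
    exact congrArg (fun r => ⟪x, y⟫_ℝ - r) (W.inner_starProjection_left_eq_right x y).symm
  -- the tight inequality rows
  set S : Set (Fin m) := {i | i ∉ E ∧ ⟪a i, xs⟫_ℝ = (b i : ℝ)} with hS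
  let v : Fin m → EuclideanSpace ℝ (Fin n) := fun i => if i ∈ S then π (a i) else 0
  have hvS : ∀ i, i ∈ S → v i = π (a i) := fun i hi => by
    show (if i ∈ S then π (a i) else 0) = π (a i)
    exact if_pos hi
  have hvNS : ∀ i, i ∉ S → v i = 0 := fun i hi => by
    show (if i ∈ S then π (a i) else 0) = 0
    exact if_neg hi
  -- first step : π cv is a nonnegative combination of the v i
  have hplain : ∃ y : Fin m → ℝ, (∀ i, 0 ≤ y i) ∧ ∑ i, y i • v i = π cv := by
    by_contra hcon
    obtain ⟨d, hd1, hd2⟩ := farkas v (π cv) hcon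
    set d' : EuclideanSpace ℝ (Fin n) := π d with hd'
    have hd'W : ∀ i ∈ E, ⟪a i, d'⟫_ℝ = 0 := fun i hi =>
      (Submodule.mem_orthogonal W d').mp (hπ_mem d) (a i) (haW i hi)
    have hd'S : ∀ i ∈ S, ⟪a i, d'⟫_ℝ ≤ 0 := fun i hi => by
      rw [hd', hπ_adj]
      have := hd1 i
      rwa [hvS i hi] at this
    have hd'c : 0 < ⟪cv, d'⟫_ℝ := by
      rw [hd', hπ_adj]; exact hd2
    -- choose a small step size
    set bound : Fin m → ℝ := fun i =>
      if h : 0 < ⟪a i, d'⟫_ℝ then (((b i : ℝ)) - ⟪a i, xs⟫_ℝ) / ⟪a i, d'⟫_ℝ else 1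
      with hbound
    set T : Finset ℝ := insert 1 (Finset.univ.image bound) with hT
    have hTne : T.Nonempty := ⟨1, Finset.mem_insert_self _ _⟩
    set ε : ℝ := T.min' hTne with hε
    have hslack : ∀ i, 0 < ⟪a i, d'⟫_ℝ → ⟪a i, xs⟫_ℝ < (b i : ℝ) := by
      intro i hipos
      by_cases hiE : i ∈ E
      · rw [hd'W i hiE] at hipos; exact absurd hipos (lt_irrefl 0)
      · rcases lt_or_eq_of_le (ha_le i hiE) with h | h
        · exact h
        · exact absurd (hd'S i ⟨hiE, h⟩) (not_le.mpr hipos)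
    have hεpos : 0 < ε := by
      rw [hε]
      apply (Finset.lt_min'_iff T hTne).mpr
      intro x hx
      rw [hT] at hx
      rcases Finset.mem_insert.mp hx with rfl | hx
      · norm_num
      · obtain ⟨i, _, rfl⟩ := Finset.mem_image.mp hx
        simp only [hbound]
        by_cases h : 0 < ⟪a i, d'⟫_ℝ
        · rw [dif_pos h]
          exact div_pos (by linarith [hslack i h]) h
        · rw [dif_neg h]; norm_num
    have hεle : ∀ i, 0 < ⟪a i, d'⟫_ℝ →
        ε * ⟪a i, d'⟫_ℝ ≤ (b i : ℝ) - ⟪a i, xs⟫_ℝ := by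
      intro i h
      have hmem : bound i ∈ T := by
        rw [hT]
        exact Finset.mem_insert_of_mem (Finset.mem_image_of_mem bound (Finset.mem_univ i))
      have := Finset.min'_le T _ hmem
      rw [← hε] at this
      simp only [hbound] at this
      rw [dif_pos h] at this
      calc ε * ⟪a i, d'⟫_ℝ ≤ (((b i : ℝ)) - ⟪a i, xs⟫_ℝ) / ⟪a i, d'⟫_ℝ * ⟪a i, d'⟫_ℝ :=
            mul_le_mul_of_nonneg_right this (le_of_lt h)
        _ = (b i : ℝ) - ⟪a i, xs⟫_ℝ := div_mul_cancel₀ _ (ne_of_gt h)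
    -- the improved point
    set x' : EuclideanSpace ℝ (Fin n) := xs + ε • d' with hx'
    have hax' : ∀ i, ⟪a i, x'⟫_ℝ = ⟪a i, xs⟫_ℝ + ε * ⟪a i, d'⟫_ℝ := fun i => by
      rw [hx', inner_add_right, real_inner_smul_right]
    have hx'F : (∀ i ∈ E, ∑ j, (A i j : ℝ) * x' j = (b i : ℝ)) ∧
        (∀ i ∉ E, ∑ j, (A i j : ℝ) * x' j ≤ (b i : ℝ)) := by
      constructor
      · intro i hi
        have h2 : ⟪a i, x'⟫_ℝ = (b i : ℝ) := by
          rw [hax', hd'W i hi, mul_zero, add_zero]; exact ha_eq i hi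
        calc ∑ j, (A i j : ℝ) * x' j = ⟪a i, x'⟫_ℝ := (hinner (a i) x').symm
          _ = (b i : ℝ) := h2
      · intro i hi
        have : ⟪a i, x'⟫_ℝ ≤ (b i : ℝ) := by
          rw [hax']
          rcases le_or_gt (⟪a i, d'⟫_ℝ) 0 with h | h
          · have : ε * ⟪a i, d'⟫_ℝ ≤ 0 := mul_nonpos_of_nonneg_of_nonpos hεpos.le h
            linarith [ha_le i hi]
          · linarith [hεle i h]
        calc ∑ j, (A i j : ℝ) * x' j = ⟪a i, x'⟫_ℝ := (hinner (a i) x').symm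
          _ ≤ (b i : ℝ) := this
    have hval : ∑ j, (ct j : ℝ) * x' j = μ + ε * ⟪cv, d'⟫_ℝ := by
      calc ∑ j, (ct j : ℝ) * x' j = ⟪cv, x'⟫_ℝ := (hinner cv x').symm
        _ = μ + ε * ⟪cv, d'⟫_ℝ := by
            rw [hx', inner_add_right, real_inner_smul_right, hcval]
    have h3 := hμ.2 ⟨x'.ofLp, hx'F, rfl⟩
    replace h3 : ∑ j, (ct j : ℝ) * x' j ≤ μ := h3
    rw [hval] at h3
    nlinarith
  -- apply Carathéodory
  obtain ⟨y0, hy0, hy0sum⟩ := hplain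
  obtain ⟨z, hznn, hzsum, hzli⟩ := carath v (π cv) y0 hy0 hy0sum
  have hzsupp : ∀ i, z i ≠ 0 → i ∈ S ∧ π (a i) ≠ 0 := by
    intro i hi
    have hvne : v i ≠ 0 := hzli.ne_zero ⟨i, hi⟩
    by_cases hiS : i ∈ S
    · refine ⟨hiS, ?_⟩
      intro h0
      apply hvne
      show (if i ∈ S then π (a i) else 0) = 0
      rw [if_pos hiS, h0]
    · exact absurd (by show (if i ∈ S then π (a i) else 0) = 0; rw [if_neg hiS]) hvne
  have hzS : ∀ i, z i ≠ 0 → i ∈ S := fun i hi => (hzsupp i hi).1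
  -- the residual is in W
  set u : EuclideanSpace ℝ (Fin n) := cv - ∑ i, z i • a i with hu
  have hπu : π u = 0 := by
    rw [hu, hπ_sub, hπ_sum]
    have : ∀ i ∈ Finset.univ, π (z i • a i) = z i • v i := by
      intro i _
      rw [hπ_smul]
      by_cases hi : z i = 0
      · rw [hi, zero_smul, zero_smul]
      · show z i • π (a i) = z i • (if i ∈ S then π (a i) else 0)
        rw [if_pos (hzS i hi)]
    rw [Finset.sum_congr rfl this, hzsum, sub_self]
  have huW : u ∈ W := hπ_zero_iff u hπu
  -- find a small subset of E indexing a spanning set of W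
  obtain ⟨t, htsub, htspan, htli⟩ := exists_linearIndependent ℝ (a '' E)
  have htfin : t.Finite := htli.setFinite
  have htW : Submodule.span ℝ t = W := by rw [htspan]
  have hchoose : ∀ x ∈ t, ∃ i, i ∈ E ∧ a i = x := by
    intro x hx
    obtain ⟨i, hiE, hia⟩ := htsub hx
    exact ⟨i, hiE, hia⟩
  choose f hf1 hf2 using hchoose
  set B : Set (Fin m) := {i | ∃ x : EuclideanSpace ℝ (Fin n), ∃ hx : x ∈ t, f x hx = i} with hB
  have hBE : ∀ i ∈ B, i ∈ E := by
    rintro i ⟨x, hx, rfl⟩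
    exact hf1 x hx
  have haB : a '' B = t := by
    ext w
    constructor
    · rintro ⟨i, ⟨x, hx, rfl⟩, rfl⟩
      rw [hf2 x hx]
      exact hx
    · intro hw
      exact ⟨f w hw, ⟨w, hw, rfl⟩, hf2 w hw⟩
  have haBinj : Set.InjOn a B := by
    rintro i ⟨x, hx, rfl⟩ i' ⟨x', hx', rfl⟩ haa
    rw [hf2 x hx, hf2 x' hx'] at haa
    subst haa
    rfl
  have hBcard : B.ncard = t.ncard := by
    rw [← haB]
    exact (Set.ncard_image_of_injOn haBinj).symm
  -- representation of u over B
  have huspan : u ∈ Submodule.span ℝ (a '' B) := by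
    rw [haB, htW]; exact huW
  obtain ⟨l, hlsupp, hlsum⟩ := (Finsupp.mem_span_image_iff_linearCombination ℝ).mp huspan
  have hlB : ∀ i ∉ B, l i = 0 := (Finsupp.mem_supported' ℝ l).mp hlsupp
  have hlsum' : ∑ i, l i • a i = u := by
    rw [← hlsum, Finsupp.linearCombination_apply]
    exact (Finsupp.sum_fintype l (fun i c => c • a i) (fun i => zero_smul ℝ (a i))).symm
  -- the dual solution
  set y : Fin m → ℝ := fun i => l i + z i with hy
  have hES : ∀ i, i ∈ E → i ∉ S := fun i hi hiS => hiS.1 hi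
  have hvec : ∑ i, y i • a i = cv := by
    have : ∀ i ∈ Finset.univ, y i • a i = l i • a i + z i • a i := fun i _ => by
      rw [hy]; exact add_smul _ _ _
    rw [Finset.sum_congr rfl this, Finset.sum_add_distrib, hlsum', hu]
    abel
  refine ⟨y, ?_, ?_, ?_, ?_, ?_⟩
  · -- A^T y = ct
    intro j
    have h := congrArg (fun w : EuclideanSpace ℝ (Fin n) => EuclideanSpace.proj j w) hvec
    simp only [map_sum, map_smul, smul_eq_mul] at h
    have hpa : ∀ i, EuclideanSpace.proj j (a i) = (A i j : ℝ) := fun i => by simp; rfl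
    have hpc : EuclideanSpace.proj j cv = (ct j : ℝ) := by simp; rfl
    simp only [hpa, hpc] at h
    rw [← h]
    exact Finset.sum_congr rfl (fun i _ => mul_comm _ _)
  · -- nonnegativity off E
    intro i hi
    have : l i = 0 := hlB i (fun hiB => hi (hBE i hiB))
    rw [hy]
    show 0 ≤ l i + z i
    rw [this, zero_add]
    exact hznn i
  · -- b^T y = μ
    have htight : ∀ i, y i ≠ 0 → ⟪a i, xs⟫_ℝ = (b i : ℝ) := by
      intro i hiy
      by_cases hiE : i ∈ E
      · exact ha_eq i hiE
      · have hl0 : l i = 0 := hlB i (fun hiB => hiE (hBE i hiB))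
        have hz0 : z i ≠ 0 := by
          intro h0
          apply hiy
          show l i + z i = 0
          rw [hl0, h0, add_zero]
        exact (hzS i hz0).2
    have h1 : ∀ i ∈ Finset.univ, (b i : ℝ) * y i = y i * ⟪a i, xs⟫_ℝ := by
      intro i _
      by_cases hiy : y i = 0
      · rw [hiy]; ring
      · rw [htight i hiy]; ring
    rw [Finset.sum_congr rfl h1]
    have h2 : ∑ i, y i * ⟪a i, xs⟫_ℝ = ⟪∑ i, y i • a i, xs⟫_ℝ := by
      rw [sum_inner]
      apply Finset.sum_congr rfl
      intro i _
      rw [real_inner_smul_left]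
    rw [h2, hvec, hcval]
  · -- support bound
    have hysub : {i | y i ≠ 0} ⊆ B ∪ {i | z i ≠ 0} := by
      intro i hi
      by_contra h
      rw [Set.mem_union] at h
      push_neg at h
      obtain ⟨h1, h2⟩ := h
      apply hi
      show l i + z i = 0
      have hz2 : z i = 0 := by simpa using h2
      rw [hlB i h1, hz2, add_zero]
    have hfinrank : Module.finrank ℝ (EuclideanSpace ℝ (Fin n)) = n := finrank_euclideanSpace_fin
    -- |B| ≤ finrank W
    have htcard : t.ncard = Module.finrank ℝ W := by
      letI : Fintype t := htfin.fintype
      rw [← htW, finrank_span_set_eq_card htli]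
      exact Set.ncard_eq_toFinset_card' t
    -- |supp z| ≤ finrank Wᗮ
    have hzcard : {i | z i ≠ 0}.ncard ≤ Module.finrank ℝ Wᗮ := by
      have hmem : ∀ i : {i // z i ≠ 0}, v ↑i ∈ Wᗮ := by
        intro ⟨i, hi⟩
        show (if i ∈ S then π (a i) else 0) ∈ Wᗮ
        by_cases hiS : i ∈ S
        · rw [if_pos hiS]; exact hπ_mem (a i)
        · rw [if_neg hiS]; exact Submodule.zero_mem _
      have hli2 : LinearIndependent ℝ (fun i : {i // z i ≠ 0} => (⟨v ↑i, hmem i⟩ : Wᗮ)) := by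
        apply LinearIndependent.of_comp (Wᗮ.subtype)
        exact hzli
      have := hli2.fintype_card_le_finrank
      rw [Set.ncard_eq_toFinset_card' ]
      rw [Set.toFinset_setOf]
      rw [← Fintype.card_subtype]
      exact this
    calc {i | y i ≠ 0}.ncard ≤ (B ∪ {i | z i ≠ 0}).ncard :=
          Set.ncard_le_ncard hysub (Set.toFinite _)
      _ ≤ B.ncard + {i | z i ≠ 0}.ncard := Set.ncard_union_le _ _
      _ ≤ Module.finrank ℝ W + Module.finrank ℝ Wᗮ := by
          rw [hBcard, htcard]
          exact Nat.add_le_add le_rfl hzcard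
      _ = n := by rw [Submodule.finrank_add_finrank_orthogonal W, hfinrank]
  · -- redundancy
    intro j hjE hjspan
    have hajW : a j ∈ W := by
      rw [hW]
      have := Submodule.apply_mem_span_image_of_mem_span
        (WithLp.linearEquiv 2 ℝ (Fin n → ℝ)).symm.toLinearMap hjspan
      rw [Set.image_image] at this
      exact this
    have hl0 : l j = 0 := hlB j (fun hjB => hjE (hBE j hjB))
    have hz0 : z j = 0 := by
      by_contra h0
      exact (hzsupp j h0).2 (hπ_zero (a j) hajW)
    show l j + z j = 0
    rw [hl0, hz0, add_zero]
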